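/- Let W, H > 0, let 0 < μ, and let K and m be natural numbers. Suppose a finite family R of pairwise non-overlapping axis-parallel rectangles inside [0, W] × [0, H] is given, each of height less than μ·H, and suppose L is a set of at most m horizontal lines. Then the rectangles of R whose interior is intersected by at least one line of L have total height at most 2·m·μ·H·⌊1/δ⌋, provided each rectangle also has width at least δ·W (0 < δ ≤ 1). -/

import Mathlib

lemma aux_floor_lt_floor {c a b : ℝ} (hc : 0 < c) (ha : 0 ≤ a) (h : a + c ≤ b) :
    ⌊a / c⌋₊ < ⌊b / c⌋₊ := by
  have h1 : ((⌊a / c⌋₊ : ℕ) + 1 : ℝ) ≤ b / c := by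
    have h2 : (⌊a / c⌋₊ : ℝ) ≤ a / c := Nat.floor_le (div_nonneg ha hc.le)
    have h4 : (a + c) / c ≤ b / c := by gcongr
    have h5 : a / c + 1 = (a + c) / c := by field_simp
    linarith
  have := Nat.le_floor (by exact_mod_cast h1 : ((⌊a / c⌋₊ + 1 : ℕ) : ℝ) ≤ b / c)
  omega

lemma aux_sum_biUnion_le {ι α : Type*} [DecidableEq ι] [DecidableEq α] (s : Finset ι)
    (t : ι → Finset α) (f : α → ℝ) (hf : ∀ a ∈ s.biUnion t, 0 ≤ f a) :
    ∑ a ∈ s.biUnion t, f a ≤ ∑ i ∈ s, ∑ a ∈ t i, f a := by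
  induction s using Finset.induction with
  | empty => simp
  | insert _ _ h ih =>
    rename_i b s'
    rw [Finset.biUnion_insert] at hf ⊢
    rw [Finset.sum_insert h]
    have hsum := Finset.sum_union_inter (s₁ := t b) (s₂ := s'.biUnion t) (f := f)
    have hnn : 0 ≤ ∑ x ∈ t b ∩ s'.biUnion t, f x :=
      Finset.sum_nonneg fun x hx =>
        hf x (Finset.mem_union_right _ (Finset.mem_inter.mp hx).2)
    have hih := ih fun a ha => hf a (Finset.mem_union_right _ ha)
    linarith

open Classical in
/-- A rectangle is encoded as `((x₁, x₂), (y₁, y₂))`. -/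
theorem cut_horizontal_items_total_height
    (W H μ δ : ℝ) (hW : 0 < W) (hH : 0 < H) (hμ : 0 < μ)
    (hδ0 : 0 < δ) (hδ1 : δ ≤ 1) (m : ℕ)
    (R : Finset ((ℝ × ℝ) × (ℝ × ℝ)))
    (hsub : ∀ r ∈ R, Set.Icc r.1.1 r.1.2 ⊆ Set.Icc 0 W ∧ Set.Icc r.2.1 r.2.2 ⊆ Set.Icc 0 H)
    (hshort : ∀ r ∈ R, r.2.2 - r.2.1 < μ * H)
    (hwide : ∀ r ∈ R, δ * W ≤ r.1.2 - r.1.1)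
    (hdisj : ∀ r ∈ R, ∀ s ∈ R, r ≠ s →
      Disjoint (Set.Ioo r.1.1 r.1.2 ×ˢ Set.Ioo r.2.1 r.2.2)
               (Set.Ioo s.1.1 s.1.2 ×ˢ Set.Ioo s.2.1 s.2.2))
    (L : Finset ℝ) (hL : L.card ≤ m) :
    ∑ r ∈ R.filter (fun r => ∃ y ∈ L, r.2.1 < y ∧ y < r.2.2 ∧ r.1.1 < r.1.2),
        (r.2.2 - r.2.1) ≤ 2 * m * μ * H * ⌊1 / δ⌋₊ := by
  classical
  set n : ℕ := ⌊1 / δ⌋₊ with hn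
  have hδW : 0 < δ * W := mul_pos hδ0 hW
  set S : ℝ → Finset ((ℝ × ℝ) × (ℝ × ℝ)) :=
    fun y => R.filter (fun r => r.2.1 < y ∧ y < r.2.2 ∧ r.1.1 < r.1.2) with hS
  -- bounds on x-coordinates
  have hx : ∀ r ∈ R, r.1.1 < r.1.2 → 0 ≤ r.1.1 ∧ r.1.2 ≤ W := by
    intro r hr hlt
    have h1 := (hsub r hr).1 (Set.left_mem_Icc.mpr hlt.le)
    have h2 := (hsub r hr).1 (Set.right_mem_Icc.mpr hlt.le)
    exact ⟨h1.1, h2.2⟩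
  -- per-line bound
  have key : ∀ y ∈ L, ∑ r ∈ S y, (r.2.2 - r.2.1) ≤ μ * H * n := by
    intro y _
    have hcard : (S y).card ≤ n := by
      have hmap : ∀ r ∈ S y, ⌊r.1.1 / (δ * W)⌋₊ ∈ Finset.range n := by
        intro r hr
        rw [Finset.mem_filter] at hr
        obtain ⟨hrR, _, _, hlt⟩ := hr
        obtain ⟨ha0, haW⟩ := hx r hrR hlt
        have hw := hwide r hrR
        have h1 : r.1.1 + δ * W ≤ W := by linarith
        have h2 : (⌊r.1.1 / (δ * W)⌋₊ : ℝ) + 1 ≤ 1 / δ := by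
          have h3 : (⌊r.1.1 / (δ * W)⌋₊ : ℝ) ≤ r.1.1 / (δ * W) :=
            Nat.floor_le (div_nonneg ha0 hδW.le)
          have h4 : r.1.1 / (δ * W) + 1 ≤ W / (δ * W) := by
            have h4a : (r.1.1 + δ * W) / (δ * W) ≤ W / (δ * W) := by gcongr
            have h4b : r.1.1 / (δ * W) + 1 = (r.1.1 + δ * W) / (δ * W) := by field_simp
            linarith
          have h5 : W / (δ * W) = 1 / δ := by
            field_simp
          linarith
        have h6 : ⌊r.1.1 / (δ * W)⌋₊ + 1 ≤ n := by
          rw [hn]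
          exact Nat.le_floor (by exact_mod_cast h2)
        exact Finset.mem_range.mpr (by omega)
      refine le_trans (Finset.card_le_card_of_injOn
        (fun r : (ℝ × ℝ) × (ℝ × ℝ) => ⌊r.1.1 / (δ * W)⌋₊) hmap ?_) (by simp)
      intro r hr s hs hfeq
      by_contra hne
      rw [Finset.mem_coe, Finset.mem_filter] at hr hs
      obtain ⟨hrR, hr1, hr2, hr3⟩ := hr
      obtain ⟨hsR, hs1, hs2, hs3⟩ := hs
      have hdis := hdisj r hrR s hsR hne
      -- x-intervals must be disjoint
      have hxdis : r.1.2 ≤ s.1.1 ∨ s.1.2 ≤ r.1.1 := by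
        by_contra hcon
        push_neg at hcon
        set x := (max r.1.1 s.1.1 + min r.1.2 s.1.2) / 2 with hxdef
        have hmaxmin : max r.1.1 s.1.1 < min r.1.2 s.1.2 := by
          rcases max_cases r.1.1 s.1.1 with ⟨he, _⟩ | ⟨he, _⟩ <;> rw [he] <;>
            [exact lt_min hr3 hcon.2; exact lt_min hcon.1 hs3]
        have hx1 : max r.1.1 s.1.1 < x := by rw [hxdef]; linarith
        have hx2 : x < min r.1.2 s.1.2 := by rw [hxdef]; linarith
        have hmem1 : (x, y) ∈ Set.Ioo r.1.1 r.1.2 ×ˢ Set.Ioo r.2.1 r.2.2 :=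
          ⟨⟨lt_of_le_of_lt (le_max_left _ _) hx1, lt_of_lt_of_le hx2 (min_le_left _ _)⟩,
            hr1, hr2⟩
        have hmem2 : (x, y) ∈ Set.Ioo s.1.1 s.1.2 ×ˢ Set.Ioo s.2.1 s.2.2 :=
          ⟨⟨lt_of_le_of_lt (le_max_right _ _) hx1, lt_of_lt_of_le hx2 (min_le_right _ _)⟩,
            hs1, hs2⟩
        exact Set.disjoint_left.mp hdis hmem1 hmem2
      obtain ⟨hr0, _⟩ := hx r hrR hr3
      obtain ⟨hs0, _⟩ := hx s hsR hs3
      have hwr := hwide r hrR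
      have hws := hwide s hsR
      rcases hxdis with h | h
      · exact absurd hfeq (Nat.ne_of_lt (aux_floor_lt_floor hδW hr0 (by linarith)))
      · exact absurd hfeq.symm (Nat.ne_of_lt (aux_floor_lt_floor hδW hs0 (by linarith)))
    calc ∑ r ∈ S y, (r.2.2 - r.2.1) ≤ ∑ r ∈ S y, μ * H := by
          refine Finset.sum_le_sum fun r hr => ?_
          exact (hshort r (Finset.mem_filter.mp hr).1).le
      _ = (S y).card * (μ * H) := by rw [Finset.sum_const, nsmul_eq_mul]
      _ ≤ n * (μ * H) := by
          have : (0:ℝ) < μ * H := mul_pos hμ hH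
          exact mul_le_mul_of_nonneg_right (by exact_mod_cast hcard) this.le
      _ = μ * H * n := by ring
  -- combine over lines
  have hsubset : R.filter (fun r => ∃ y ∈ L, r.2.1 < y ∧ y < r.2.2 ∧ r.1.1 < r.1.2)
      ⊆ L.biUnion S := by
    intro r hr
    rw [Finset.mem_filter] at hr
    obtain ⟨hrR, y, hy, h1, h2, h3⟩ := hr
    exact Finset.mem_biUnion.mpr ⟨y, hy, Finset.mem_filter.mpr ⟨hrR, h1, h2, h3⟩⟩
  have hnonneg : ∀ r ∈ L.biUnion S, (0:ℝ) ≤ r.2.2 - r.2.1 := by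
    intro r hr
    obtain ⟨y, _, hy⟩ := Finset.mem_biUnion.mp hr
    obtain ⟨_, h1, h2, _⟩ := Finset.mem_filter.mp hy
    linarith
  calc ∑ r ∈ R.filter (fun r => ∃ y ∈ L, r.2.1 < y ∧ y < r.2.2 ∧ r.1.1 < r.1.2),
        (r.2.2 - r.2.1)
      ≤ ∑ r ∈ L.biUnion S, (r.2.2 - r.2.1) :=
        Finset.sum_le_sum_of_subset_of_nonneg hsubset (fun r hr _ => hnonneg r hr)
    _ ≤ ∑ y ∈ L, ∑ r ∈ S y, (r.2.2 - r.2.1) :=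
        aux_sum_biUnion_le L S _ hnonneg
    _ ≤ ∑ _y ∈ L, μ * H * n := Finset.sum_le_sum key
    _ = L.card * (μ * H * n) := by rw [Finset.sum_const, nsmul_eq_mul]
    _ ≤ m * (μ * H * n) := by
        have h0 : (0:ℝ) ≤ μ * H * n := by positivity
        exact mul_le_mul_of_nonneg_right (by exact_mod_cast hL) h0
    _ ≤ 2 * m * μ * H * n := by
        nlinarith [mul_nonneg (mul_nonneg (mul_nonneg (Nat.cast_nonneg m : (0:ℝ) ≤ m) hμ.le) hH.le)
          (Nat.cast_nonneg n : (0:ℝ) ≤ n)]
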